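/- For every rational number q > 1 that is not of the form n^n for any positive integer n, there exists an irrational real number x > 1 such that x^x = q. -/

import Mathlib

/-- If `r > 0` and `r ^ r.num = s ^ r.den` for some nonzero rational `s`,
then `r` is an integer. -/
lemma aux_den_eq_one (r s : ℚ) (hr : 0 < r) (_hs : s ≠ 0)
    (hrs : r ^ r.num.toNat = s ^ r.den) : r.den = 1 := by
  set a : ℕ := r.num.toNat with ha
  set b : ℕ := r.den with hb
  have hr0 : r ≠ 0 := ne_of_gt hr
  have hnum : r.num.natAbs = a := by
    have : 0 < r.num := Rat.num_pos.mpr hr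
    omega
  have hcop : IsCoprime (a : ℤ) (b : ℤ) := by
    rw [Int.isCoprime_iff_gcd_eq_one]
    have := r.reduced
    rw [hnum] at this
    simpa [Int.gcd] using this
  obtain ⟨u, v, huv⟩ := hcop
  -- r = (s^u * r^v) ^ b  (zpow)
  have key : r = (s ^ u * r ^ v) ^ (b : ℤ) := by
    have h1 : r ^ (a : ℤ) = s ^ (b : ℤ) := by
      rw [zpow_natCast, zpow_natCast, hrs]
    calc r = r ^ (u * a + v * b : ℤ) := by rw [huv, zpow_one]
      _ = (r ^ (a : ℤ)) ^ u * (r ^ (b : ℤ)) ^ v := by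
          rw [zpow_add₀ hr0, mul_comm u (a:ℤ), mul_comm v (b:ℤ), zpow_mul, zpow_mul]
      _ = (s ^ (b : ℤ)) ^ u * (r ^ (b : ℤ)) ^ v := by rw [h1]
      _ = (s ^ u * r ^ v) ^ (b : ℤ) := by
          rw [mul_zpow, ← zpow_mul, ← zpow_mul, ← zpow_mul, ← zpow_mul,
            mul_comm u (b:ℤ), mul_comm v (b:ℤ)]
  set t : ℚ := s ^ u * r ^ v with ht
  have key2 : r = t ^ b := by rw [key, zpow_natCast]
  have hden : b = t.den ^ b := by
    conv_lhs => rw [hb, key2, Rat.den_pow]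
  by_contra hb1
  have hd0 : t.den ≠ 0 := t.den_nz
  have hd1 : t.den ≠ 1 := by
    intro h1
    rw [h1, one_pow] at hden
    exact hb1 hden
  have hb2 : 2 ≤ t.den := by omega
  have : b < t.den ^ b :=
    lt_of_lt_of_le (Nat.lt_two_pow_self (n := b)) (Nat.pow_le_pow_left hb2 b)
  omega

theorem stmt_3 (q : ℚ) (hq : 1 < q) (h : ¬ ∃ n : ℕ, 0 < n ∧ (n : ℚ) ^ n = q) :
    ∃ x : ℝ, 1 < x ∧ Irrational x ∧ x ^ x = (q : ℝ) := by
  have hq1 : (1 : ℝ) < (q : ℝ) := by exact_mod_cast hq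
  set c : ℝ := (q : ℝ) with hc
  have hc1 : (1 : ℝ) ≤ c := le_of_lt hq1
  have hcont : ContinuousOn (fun x : ℝ => x ^ x) (Set.Icc 1 c) :=
    ContinuousOn.rpow continuousOn_id continuousOn_id
      (fun x hx => Or.inl (by have := hx.1; positivity))
  have hIVT := intermediate_value_Ioc hc1 hcont
  have hmem : c ∈ Set.Ioc ((1:ℝ) ^ (1:ℝ)) (c ^ c) := by
    constructor
    · rw [Real.one_rpow]; exact hq1
    · calc c = c ^ (1:ℝ) := (Real.rpow_one c).symm
        _ ≤ c ^ c := Real.rpow_le_rpow_of_exponent_le hc1 hc1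
  obtain ⟨x, hxmem, hxval⟩ := hIVT hmem
  refine ⟨x, hxmem.1, ?_, hxval⟩
  rintro ⟨r, hrx⟩
  have hr1 : (1 : ℝ) < (r : ℝ) := by rw [hrx]; exact hxmem.1
  have hr1' : (1 : ℚ) < r := by exact_mod_cast hr1
  have hr0 : (0 : ℚ) < r := lt_trans one_pos hr1'
  have hxr : ((r : ℝ)) ^ ((r : ℝ)) = (q : ℝ) := by rw [hrx]; exact hxval
  -- raise to the power r.den
  have hmul : (r : ℝ) * (r.den : ℝ) = (r.num : ℝ) := by
    have hd : (r.den : ℝ) ≠ 0 := Nat.cast_ne_zero.mpr r.den_nz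
    have : ((r.num : ℚ) / (r.den : ℚ) : ℝ) = (r : ℝ) := by
      exact_mod_cast congrArg (fun z : ℚ => (z : ℝ)) (Rat.num_div_den r)
    push_cast at this
    rw [← this]
    field_simp
  have hnum_toNat : (r.num.toNat : ℤ) = r.num := Int.toNat_of_nonneg (le_of_lt (Rat.num_pos.mpr hr0))
  have hpow : (r : ℝ) ^ (r.num.toNat : ℕ) = (q : ℝ) ^ (r.den : ℕ) := by
    have h0 : (0 : ℝ) ≤ (r : ℝ) := by positivity
    calc (r : ℝ) ^ (r.num.toNat : ℕ) = (r : ℝ) ^ ((r.num.toNat : ℕ) : ℝ) :=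
          (Real.rpow_natCast _ _).symm
      _ = (r : ℝ) ^ ((r : ℝ) * (r.den : ℝ)) := by
          rw [hmul]
          congr 1
          exact_mod_cast hnum_toNat
      _ = ((r : ℝ) ^ (r : ℝ)) ^ ((r.den : ℕ) : ℝ) := Real.rpow_mul h0 _ _
      _ = (q : ℝ) ^ (r.den : ℕ) := by rw [hxr, Real.rpow_natCast]
  have hpowQ : r ^ r.num.toNat = q ^ r.den := by exact_mod_cast hpow
  have hden1 : r.den = 1 := aux_den_eq_one r q hr0 (ne_of_gt (lt_trans one_pos hq)) hpowQ
  -- so r is a natural number n > 0 with n^n = q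
  set n : ℕ := r.num.toNat with hn
  have hrn : (r : ℚ) = (n : ℚ) := by
    have : r.num = (n : ℤ) := hnum_toNat.symm
    rw [← Rat.num_div_den r, hden1, this]
    push_cast; ring
  have hnpos : 0 < n := by
    have : (0 : ℚ) < (n : ℚ) := hrn ▸ hr0
    exact_mod_cast this
  apply h
  refine ⟨n, hnpos, ?_⟩
  have : ((n : ℚ) : ℝ) ^ (n : ℕ) = (q : ℝ) := by
    rw [← Real.rpow_natCast]
    calc ((n:ℚ):ℝ) ^ ((n:ℕ):ℝ) = (r : ℝ) ^ ((r : ℝ)) := by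
          rw [hrn]; push_cast; ring_nf
      _ = (q : ℝ) := hxr
  exact_mod_cast this
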